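/- Let A be a Schur ring over the infinite dihedral group D∞, let i and j be distinct nonzero integers, suppose {z^i, z^{−i}} and {z^j, z^{−j}} are basic sets of A, and let D be a basic set of A containing s, z^i s and z^j s. Then j ≠ 2i and i ≠ 2j. -/

import Mathlib

open scoped BigOperators

/-- A Schur ring over the group `G` with coefficients in the field `F`, presented by its
partition into finite nonempty basic sets. -/
structure SchurRing (F : Type) [Field F] [CharZero F] (G : Type) [Group G] [DecidableEq G] where
  /-- the basic sets -/
  parts : Set (Finset G)
  nonempty : ∀ C ∈ parts, C.Nonempty
  cover : ∀ g : G, ∃ C ∈ parts, g ∈ C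
  eq_or_disjoint : ∀ C ∈ parts, ∀ D ∈ parts, C = D ∨ Disjoint C D
  one_mem : ({1} : Finset G) ∈ parts
  inv_mem : ∀ C ∈ parts, C.image (·⁻¹) ∈ parts
  mul_mem : ∀ C ∈ parts, ∀ D ∈ parts, ∃ S : Finset (Finset G),
    (↑S : Set (Finset G)) ⊆ parts ∧ ∃ coef : Finset G → F,
      (∑ g ∈ C, MonoidAlgebra.single g (1 : F)) * (∑ g ∈ D, MonoidAlgebra.single g (1 : F))
        = ∑ E ∈ S, coef E • ∑ g ∈ E, MonoidAlgebra.single g (1 : F)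

/-- A subset of `G` is an `A`-set if it is a union of basic sets of `A`. -/
def SchurRing.IsASet {F : Type} [Field F] [CharZero F] {G : Type} [Group G] [DecidableEq G]
    (A : SchurRing F G) (X : Set G) : Prop :=
  ∃ 𝒮 : Set (Finset G), 𝒮 ⊆ A.parts ∧ X = ⋃ C ∈ 𝒮, (C : Set G)

/-- The infinite dihedral group, realized as `DihedralGroup 0`. -/
abbrev Dinf : Type := DihedralGroup 0

/-- The generator `z` of infinite order. -/
def zz : Dinf := DihedralGroup.r 1

/-- The reflection `s` of order two. -/
def ss : Dinf := DihedralGroup.sr 0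


lemma zz_zpow (n : ℤ) : zz ^ n = DihedralGroup.r (n : ZMod 0) := by
  induction n using Int.induction_on with
  | zero => rw [zpow_zero]; rfl
  | succ k ih => rw [zpow_add, ih]; simp [zz, DihedralGroup.r_mul_r]; exact DihedralGroup.r_mul_r _ _
  | pred k ih =>
    rw [sub_eq_add_neg, zpow_add, ih, zpow_neg, zpow_one]
    have h1 : zz⁻¹ = DihedralGroup.r (-1) := rfl
    rw [h1]; exact DihedralGroup.r_mul_r _ _

lemma zz_inj : Function.Injective (fun n : ℤ => zz ^ n) := by
  intro n m h
  simp only [zz_zpow, DihedralGroup.r.injEq] at h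
  exact DihedralGroup.r.inj h

section eval
set_option linter.unusedSectionVars false
variable {F : Type} [Field F] [CharZero F] {G : Type} [Group G] [DecidableEq G]

lemma eval_sum (E : Finset G) (x : G) :
    (∑ g ∈ E, MonoidAlgebra.single g (1 : F)).coeff x = if x ∈ E then 1 else 0 := by
  rw [MonoidAlgebra.coeff_sum, Finset.sum_apply']
  simp [MonoidAlgebra.single_apply, Finsupp.single_apply]

lemma eval_mul (C D : Finset G) (x : G) :
    ((∑ g ∈ C, MonoidAlgebra.single g (1 : F)) * (∑ g ∈ D, MonoidAlgebra.single g (1 : F))).coeff x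
      = ∑ c ∈ C, if c⁻¹ * x ∈ D then (1:F) else 0 := by
  rw [Finset.sum_mul_sum]
  simp only [MonoidAlgebra.single_mul_single, one_mul]
  rw [MonoidAlgebra.coeff_sum, Finset.sum_apply']
  refine Finset.sum_congr rfl fun c _ => ?_
  rw [MonoidAlgebra.coeff_sum, Finset.sum_apply']
  simp only [MonoidAlgebra.single_apply, ← eq_inv_mul_iff_mul_eq]
  rw [Finset.sum_ite_eq' D (c⁻¹ * x) (fun _ => (1:F))]
end eval

lemma key (F : Type) [Field F] [CharZero F] (A : SchurRing F Dinf)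
    (i : ℤ) (hi : i ≠ 0)
    (hCi : ({zz ^ i, zz ^ (-i)} : Finset Dinf) ∈ A.parts)
    (D : Finset Dinf) (hD : D ∈ A.parts) (g : Dinf) (hg : g ∈ D)
    (h1 : zz ^ i * g ∈ D) (h2 : zz ^ (-i) * g ∈ D) : False := by
  obtain ⟨S, hS, coef, heq⟩ := A.mul_mem _ hCi D hD
  have hne : zz ^ i ≠ zz ^ (-i) := fun h => hi (by have := zz_inj h; omega)
  have hval : ∀ x : Dinf,
      ((∑ g ∈ ({zz ^ i, zz ^ (-i)} : Finset Dinf), MonoidAlgebra.single g (1 : F))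
        * (∑ g ∈ D, MonoidAlgebra.single g (1 : F))).coeff x
      = (if zz ^ (-i) * x ∈ D then (1:F) else 0) + (if zz ^ i * x ∈ D then (1:F) else 0) := by
    intro x
    rw [eval_mul, Finset.sum_pair hne, ← zpow_neg, ← zpow_neg, neg_neg]
  have hrhs : ∀ x ∈ D, ∀ y ∈ D,
      ((∑ g ∈ ({zz ^ i, zz ^ (-i)} : Finset Dinf), MonoidAlgebra.single g (1 : F))
        * (∑ g ∈ D, MonoidAlgebra.single g (1 : F))).coeff x
      = ((∑ g ∈ ({zz ^ i, zz ^ (-i)} : Finset Dinf), MonoidAlgebra.single g (1 : F))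
        * (∑ g ∈ D, MonoidAlgebra.single g (1 : F))).coeff y := by
    have aux : ∀ x ∈ D,
        ((∑ g ∈ ({zz ^ i, zz ^ (-i)} : Finset Dinf), MonoidAlgebra.single g (1 : F))
          * (∑ g ∈ D, MonoidAlgebra.single g (1 : F))).coeff x
        = ∑ E ∈ S, if E = D then coef E else 0 := by
      intro x hx
      rw [heq, MonoidAlgebra.coeff_sum, Finset.sum_apply']
      refine Finset.sum_congr rfl fun E hE => ?_
      rw [MonoidAlgebra.coeff_smul_apply, eval_sum]
      rcases A.eq_or_disjoint E (hS hE) D hD with h | h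
      · simp [h, hx]
      · have hxE : x ∉ E := fun hxE => Finset.disjoint_left.mp h hxE hx
        have hED : E ≠ D := fun hED => hxE (hED ▸ hx)
        simp [hxE, hED]
    intro x hx y hy
    rw [aux x hx, aux y hy]
  have hg2 : ((∑ g ∈ ({zz ^ i, zz ^ (-i)} : Finset Dinf), MonoidAlgebra.single g (1 : F))
        * (∑ g ∈ D, MonoidAlgebra.single g (1 : F))).coeff g = 2 := by
    rw [hval, if_pos h2, if_pos h1]; norm_num
  have step : ∀ x ∈ D, zz ^ i * x ∈ D := by
    intro x hx
    have h2x := (hrhs x hx g hg).trans hg2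
    rw [hval] at h2x
    by_contra hxo
    rw [if_neg hxo] at h2x
    rcases ite_eq_or_eq (zz ^ (-i) * x ∈ D) (1:F) 0 with h | h <;> rw [h] at h2x <;>
      · rw [add_zero] at h2x; norm_num at h2x
  have all : ∀ k : ℕ, zz ^ (i * k) * g ∈ D := by
    intro k
    induction k with
    | zero => simpa using hg
    | succ k ih =>
      have : i * (k + 1 : ℕ) = i + i * k := by push_cast; ring
      rw [this, zpow_add, mul_assoc]
      exact step _ ih
  have hinf : (↑D : Set Dinf).Infinite := by
    have hinj : Function.Injective (fun k : ℕ => zz ^ (i * k) * g) := by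
      intro k l h
      simp only [mul_left_inj] at h
      have h2 := zz_inj h
      have h3 : i * k = i * l := h2
      exact Nat.cast_injective (mul_left_cancel₀ hi h3)
    exact Set.infinite_of_injective_forall_mem hinj (fun k => all k)
  exact hinf D.finite_toSet

/-- If `{z^i, z^(-i)}` and `{z^j, z^(-j)}` are basic sets, where `i`, `j` are distinct nonzero
integers, and some basic set `D` contains `s`, `z^i s` and `z^j s`, then `j ≠ 2i` and `i ≠ 2j`. -/
theorem stmt_11 (F : Type) [Field F] [CharZero F] (A : SchurRing F Dinf)
    (i j : ℤ) (hi : i ≠ 0) (hj : j ≠ 0) (hij : i ≠ j)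
    (hCi : ({zz ^ i, zz ^ (-i)} : Finset Dinf) ∈ A.parts)
    (hCj : ({zz ^ j, zz ^ (-j)} : Finset Dinf) ∈ A.parts)
    (D : Finset Dinf) (hD : D ∈ A.parts)
    (hsD : ss ∈ D) (hiD : zz ^ i * ss ∈ D) (hjD : zz ^ j * ss ∈ D) :
    j ≠ 2 * i ∧ i ≠ 2 * j := by
  constructor
  · intro h
    refine key F A i hi hCi D hD (zz ^ i * ss) hiD ?_ ?_
    · rw [← mul_assoc, ← zpow_add]
      have : i + i = j := by omega
      rw [this]; exact hjD
    · rw [← mul_assoc, ← zpow_add]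
      simpa using hsD
  · intro h
    refine key F A j hj hCj D hD (zz ^ j * ss) hjD ?_ ?_
    · rw [← mul_assoc, ← zpow_add]
      have : j + j = i := by omega
      rw [this]; exact hiD
    · rw [← mul_assoc, ← zpow_add]
      simpa using hsD
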